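/- arXiv:2101.11041 — 3 statements merged into one kernel-verified Lean document; each statement's English description precedes it below -/
import Mathlib

section
/- If f: E → ℝ is convex, differentiable, and (L, κ)-weakly smooth w.r.t. ‖·‖ with κ ∈ (1,2], and x* is a global minimizer of f, then for all x: f(x) − f(x*) ≥ ((κ−1)/(L^{1/(κ−1)} κ)) ‖∇f(x)‖_*^{κ/(κ−1)}. -/
/-- If `f : E → ℝ` is convex, differentiable, `(L, κ)`-weakly smooth w.r.t. `‖·‖` with
`κ ∈ (1,2]`, and `x*` is a global minimizer of `f`, then for all `x`:
`f(x) − f(x*) ≥ ((κ−1)/(L^{1/(κ−1)} κ)) ‖∇f(x)‖_*^{κ/(κ−1)}`. -/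
theorem stmt4 {E : Type*} [NormedAddCommGroup E] [NormedSpace ℝ E] [FiniteDimensional ℝ E]
    (f : E → ℝ) (L κ : ℝ) (hL : 0 < L) (hκ1 : 1 < κ) (hκ2 : κ ≤ 2)
    (hconv : ConvexOn ℝ Set.univ f) (hdiff : Differentiable ℝ f)
    (hsmooth : ∀ x y : E, ‖fderiv ℝ f x - fderiv ℝ f y‖ ≤ L * ‖x - y‖ ^ (κ - 1))
    (xstar : E) (hmin : ∀ y : E, f xstar ≤ f y) :
    ∀ x : E,
      ((κ - 1) / (L ^ (1 / (κ - 1)) * κ)) * ‖fderiv ℝ f x‖ ^ (κ / (κ - 1)) ≤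
        f x - f xstar := by
  intro x
  have hκ0 : (0:ℝ) < κ := lt_trans one_pos hκ1
  have hκ1' : (0:ℝ) < κ - 1 := by linarith
  set a := fderiv ℝ f x with ha
  by_cases h0 : a = 0
  · rw [h0]
    simp only [norm_zero]
    rw [Real.zero_rpow (by positivity)]
    have := hmin x
    linarith
  have hne : ∃ w : E, a w ≠ 0 := by
    by_contra h
    push_neg at h
    exact h0 (ContinuousLinearMap.ext fun w => by simp [h w])
  obtain ⟨w, hw⟩ := hne
  haveI : Nontrivial E := ⟨w, 0, fun h => by simp [h] at hw⟩
  obtain ⟨v, hvmem, hvmax'⟩ := (isCompact_sphere (0:E) 1).exists_isMaxOn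
    (NormedSpace.sphere_nonempty.mpr zero_le_one) a.continuous.continuousOn
  have hvmax : ∀ u ∈ Metric.sphere (0:E) 1, a u ≤ a v := fun u hu => hvmax' hu
  have hv1 : ‖v‖ = 1 := by simpa using hvmem
  have hnegmem : ∀ u : E, u ∈ Metric.sphere (0:E) 1 → -u ∈ Metric.sphere (0:E) 1 := by
    intro u hu; simpa using hu
  have hav_nonneg : 0 ≤ a v := by
    have := hvmax (-v) (hnegmem v hvmem)
    simp only [map_neg] at this
    linarith
  have hc : a v = ‖a‖ := by
    apply le_antisymm
    · calc a v ≤ ‖a v‖ := le_abs_self _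
        _ ≤ ‖a‖ * ‖v‖ := a.le_opNorm v
        _ = ‖a‖ := by rw [hv1, mul_one]
    · apply a.opNorm_le_bound hav_nonneg
      intro y
      by_cases hy : y = 0
      · simp [hy]
      · have hyn : (0:ℝ) < ‖y‖ := norm_pos_iff.mpr hy
        have hu : ‖y‖⁻¹ • y ∈ Metric.sphere (0:E) 1 := by
          simp [norm_smul, abs_of_pos (inv_pos.mpr hyn), inv_mul_cancel₀ hyn.ne']
        have h1 := hvmax _ hu
        have h2 := hvmax _ (hnegmem _ hu)
        simp only [map_neg, map_smul, smul_eq_mul] at h1 h2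
        rw [Real.norm_eq_abs, abs_le]
        constructor
        · have h2' : ‖y‖⁻¹ * (-(a y)) ≤ a v := by linarith
          have := (inv_mul_le_iff₀ hyn).mp h2'
          linarith
        · have := (inv_mul_le_iff₀ hyn).mp h1
          linarith
  set c : ℝ := ‖a‖ with hcdef
  have hcpos : 0 < c := norm_pos_iff.mpr h0
  set t₀ : ℝ := (c / L) ^ (1 / (κ - 1)) with ht₀
  have ht₀pos : 0 < t₀ := Real.rpow_pos_of_pos (div_pos hcpos hL) _
  -- descent along -v
  set φ : ℝ → ℝ := fun t => f (x - t • v) + t * c - (L / κ) * t ^ κ with hφ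
  have hder : ∀ t : ℝ, HasDerivAt φ
      (-(fderiv ℝ f (x - t • v)) v + c - L * t ^ (κ - 1)) t := by
    intro t
    have h1 : HasDerivAt (fun t : ℝ => x - t • v) (-v) t := by
      simpa using ((hasDerivAt_id t).smul_const v).const_sub x
    have h2 : HasDerivAt (fun t : ℝ => f (x - t • v))
        ((fderiv ℝ f (x - t • v)) (-v)) t :=
      (hdiff (x - t • v)).hasFDerivAt.comp_hasDerivAt t h1
    have h3 : HasDerivAt (fun t : ℝ => t * c) c t := hasDerivAt_mul_const c
    have h4 : HasDerivAt (fun t : ℝ => (L / κ) * t ^ κ)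
        ((L / κ) * (κ * t ^ (κ - 1))) t :=
      (Real.hasDerivAt_rpow_const (Or.inr hκ1.le)).const_mul (L / κ)
    have := (h2.add h3).sub h4
    refine this.congr_deriv ?_
    rw [map_neg]
    field_simp
  have hderle : ∀ t ∈ Set.Ioo (0:ℝ) t₀,
      -(fderiv ℝ f (x - t • v)) v + c - L * t ^ (κ - 1) ≤ 0 := by
    intro t ht
    have htpos : 0 < t := ht.1
    have hb : c - (fderiv ℝ f (x - t • v)) v ≤ L * t ^ (κ - 1) := by
      have h1 : c - (fderiv ℝ f (x - t • v)) v = (a - fderiv ℝ f (x - t • v)) v := by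
        rw [ContinuousLinearMap.sub_apply, hc]
      rw [h1]
      calc (a - fderiv ℝ f (x - t • v)) v ≤ ‖(a - fderiv ℝ f (x - t • v)) v‖ :=
            le_abs_self _
        _ ≤ ‖a - fderiv ℝ f (x - t • v)‖ * ‖v‖ := ContinuousLinearMap.le_opNorm _ _
        _ = ‖a - fderiv ℝ f (x - t • v)‖ := by rw [hv1, mul_one]
        _ ≤ L * ‖x - (x - t • v)‖ ^ (κ - 1) := hsmooth x (x - t • v)
        _ = L * t ^ (κ - 1) := by
            rw [show x - (x - t • v) = t • v by abel, norm_smul, hv1, mul_one,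
              Real.norm_eq_abs, abs_of_pos htpos]
    linarith
  have hanti : AntitoneOn φ (Set.Icc 0 t₀) := by
    apply antitoneOn_of_deriv_nonpos (convex_Icc 0 t₀)
    · exact fun t _ => ((hder t).continuousAt).continuousWithinAt
    · intro t ht
      rw [interior_Icc] at ht
      exact ((hder t).differentiableAt).differentiableWithinAt
    · intro t ht
      rw [interior_Icc] at ht
      rw [(hder t).deriv]
      exact hderle t ht
  have key : φ t₀ ≤ φ 0 :=
    hanti (Set.left_mem_Icc.mpr ht₀pos.le) (Set.right_mem_Icc.mpr ht₀pos.le) ht₀pos.le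
  have hφ0 : φ 0 = f x := by
    simp only [hφ, zero_smul, sub_zero, zero_mul, add_zero]
    rw [Real.zero_rpow hκ0.ne']
    ring
  have hstep : t₀ * c - (L / κ) * t₀ ^ κ ≤ f x - f xstar := by
    have h1 := hmin (x - t₀ • v)
    rw [hφ0] at key
    simp only [hφ] at key
    linarith
  -- algebra: LHS of goal equals t₀ * c - (L/κ) * t₀ ^ κ
  have halg : ((κ - 1) / (L ^ (1 / (κ - 1)) * κ)) * c ^ (κ / (κ - 1)) =
      t₀ * c - (L / κ) * t₀ ^ κ := by
    have hCL : (0:ℝ) < c / L := div_pos hcpos hL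
    have hβ : 1 / (κ - 1) + 1 = κ / (κ - 1) := by field_simp; ring
    have e1 : t₀ * c = c ^ (κ / (κ - 1)) / L ^ (1 / (κ - 1)) := by
      rw [ht₀, Real.div_rpow hcpos.le hL.le, div_mul_eq_mul_div,
        ← Real.rpow_add_one hcpos.ne', hβ]
    have e2 : t₀ ^ κ = c ^ (κ / (κ - 1)) / L ^ (κ / (κ - 1)) := by
      rw [ht₀, ← Real.rpow_mul hCL.le,
        (show 1 / (κ - 1) * κ = κ / (κ - 1) by ring), Real.div_rpow hcpos.le hL.le]
    have e3 : L ^ (κ / (κ - 1)) = L ^ (1 / (κ - 1)) * L := by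
      rw [← hβ, Real.rpow_add_one hL.ne']
    have hLβ : (0:ℝ) < L ^ (1 / (κ - 1)) := Real.rpow_pos_of_pos hL _
    rw [e1, e2, e3]
    field_simp
  rw [ha, ← hcdef] at *
  rw [halg]
  exact hstep
end

section
/- If f: E → ℝ is convex, differentiable, and (L, κ)-weakly smooth w.r.t. ‖·‖ with κ ∈ (1,2], then for all x, y ∈ E: ((κ−1)/(L^{1/(κ−1)} κ)) ‖∇f(y) − ∇f(x)‖_*^{κ/(κ−1)} ≤ f(y) − f(x) − ⟨∇f(x), y − x⟩. -/
open Set Filter Topology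

-- gradient inequality for convex differentiable functions
lemma grad_ineq' {E : Type*} [NormedAddCommGroup E] [NormedSpace ℝ E]
    (f : E → ℝ) (hconv : ConvexOn ℝ Set.univ f) (hdiff : Differentiable ℝ f)
    (a b : E) : f a + fderiv ℝ f a (b - a) ≤ f b := by
  set v := b - a with hv
  have hcurve : ∀ t : ℝ, HasDerivAt (fun s : ℝ => a + s • v) v t := fun t => by
    simpa using ((hasDerivAt_id t).smul_const v).const_add a
  have hder : ∀ t : ℝ, HasDerivAt (fun s : ℝ => f (a + s • v)) (fderiv ℝ f (a + t • v) v) t :=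
    fun t => (hdiff (a + t • v)).hasFDerivAt.comp_hasDerivAt t (hcurve t)
  have hconvh : ConvexOn ℝ Set.univ (fun s : ℝ => f (a + s • v)) := by
    have := hconv.comp_affineMap (AffineMap.lineMap a b)
    have heq : ∀ s : ℝ, (f ∘ (AffineMap.lineMap a b)) s = f (a + s • v) := by
      intro s; simp [AffineMap.lineMap_apply, hv, add_comm]
    simpa [Set.preimage_univ, funext heq] using this
  have hs := hconvh.le_slope_of_hasDerivWithinAt (mem_univ (0:ℝ)) (mem_univ (1:ℝ)) one_pos
    (hder 0).hasDerivWithinAt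
  rw [slope_def_field] at hs
  simp only [zero_smul, add_zero, one_smul, sub_zero, div_one] at hs
  have : a + v = b := by simp [hv]
  rw [this] at hs
  linarith

lemma descent' {E : Type*} [NormedAddCommGroup E] [NormedSpace ℝ E]
    (f : E → ℝ) (L κ : ℝ) (hL : 0 < L) (hκ1 : 1 < κ)
    (hdiff : Differentiable ℝ f)
    (hsmooth : ∀ x y : E, ‖fderiv ℝ f x - fderiv ℝ f y‖ ≤ L * ‖x - y‖ ^ (κ - 1))
    (a b : E) : f b ≤ f a + fderiv ℝ f a (b - a) + L / κ * ‖b - a‖ ^ κ := by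
  have hκ0 : 0 < κ - 1 := by linarith
  have hκpos : 0 < κ := by linarith
  -- continuity of the derivative
  have hcont : Continuous (fun z : E => fderiv ℝ f z) := by
    rw [continuous_iff_continuousAt]
    intro z
    rw [ContinuousAt, tendsto_iff_dist_tendsto_zero]
    apply squeeze_zero (fun y => dist_nonneg)
      (fun y => by simpa [dist_eq_norm] using hsmooth y z)
    have h0 : Tendsto (fun y : E => ‖y - z‖) (𝓝 z) (𝓝 0) := by
      have := ((continuous_id.sub continuous_const).norm.tendsto z : Tendsto (fun y : E => ‖y - z‖) (𝓝 z) (𝓝 ‖z - z‖))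
      simpa using this
    have h2 : Tendsto (fun y : E => L * ‖y - z‖ ^ (κ - 1)) (𝓝 z) (𝓝 (L * (0:ℝ) ^ (κ - 1))) :=
      (((Real.continuousAt_rpow_const 0 (κ-1) (Or.inr hκ0.le)).tendsto.comp h0).const_mul L)
    simpa [Real.zero_rpow hκ0.ne'] using h2
  set v := b - a with hv
  have hcurve : ∀ t : ℝ, HasDerivAt (fun s : ℝ => a + s • v) v t := fun t => by
    simpa using ((hasDerivAt_id t).smul_const v).const_add a
  have hder : ∀ t : ℝ, HasDerivAt (fun s : ℝ => f (a + s • v)) (fderiv ℝ f (a + t • v) v) t :=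
    fun t => (hdiff (a + t • v)).hasFDerivAt.comp_hasDerivAt t (hcurve t)
  have hcontd : Continuous (fun t : ℝ => fderiv ℝ f (a + t • v) v) :=
    (hcont.comp (continuous_const.add (continuous_id.smul continuous_const))).clm_apply
      continuous_const
  have key : ∫ t in (0:ℝ)..1, fderiv ℝ f (a + t • v) v = f (a + (1:ℝ) • v) - f (a + (0:ℝ) • v) :=
    intervalIntegral.integral_eq_sub_of_hasDerivAt (fun t _ => hder t)
      (hcontd.intervalIntegrable 0 1)
  -- pointwise bound
  have hptwise : ∀ t ∈ Set.Icc (0:ℝ) 1,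
      fderiv ℝ f (a + t • v) v ≤ fderiv ℝ f a v + L * t ^ (κ - 1) * ‖v‖ ^ κ := by
    intro t ht
    have h1 : fderiv ℝ f (a + t • v) v - fderiv ℝ f a v
        = (fderiv ℝ f (a + t • v) - fderiv ℝ f a) v := by simp
    have h2 : (fderiv ℝ f (a + t • v) - fderiv ℝ f a) v
        ≤ ‖fderiv ℝ f (a + t • v) - fderiv ℝ f a‖ * ‖v‖ :=
      le_trans (le_abs_self _) ((fderiv ℝ f (a + t • v) - fderiv ℝ f a).le_opNorm v)
    have h3 : ‖fderiv ℝ f (a + t • v) - fderiv ℝ f a‖ ≤ L * ‖t • v‖ ^ (κ - 1) := by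
      simpa using hsmooth (a + t • v) a
    have h4 : ‖t • v‖ ^ (κ - 1) = t ^ (κ - 1) * ‖v‖ ^ (κ - 1) := by
      rw [norm_smul, Real.norm_eq_abs, abs_of_nonneg ht.1, Real.mul_rpow ht.1 (norm_nonneg v)]
    have h5 : ‖v‖ ^ (κ - 1) * ‖v‖ = ‖v‖ ^ κ := by
      nth_rewrite 2 [← Real.rpow_one ‖v‖]
      rw [← Real.rpow_add' (norm_nonneg v) (by ring_nf; linarith)]
      ring_nf
    have h6 : (fderiv ℝ f (a + t • v) - fderiv ℝ f a) v ≤ (L * ‖t • v‖ ^ (κ - 1)) * ‖v‖ :=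
      le_trans h2 (mul_le_mul_of_nonneg_right h3 (norm_nonneg v))
    have h7 : (L * ‖t • v‖ ^ (κ - 1)) * ‖v‖ = L * t ^ (κ - 1) * ‖v‖ ^ κ := by
      rw [h4, ← h5]; ring
    rw [h7] at h6; linarith [h1 ▸ h6]
  -- integral bound
  have hint : ∫ t in (0:ℝ)..1, fderiv ℝ f (a + t • v) v
      ≤ ∫ t in (0:ℝ)..1, (fderiv ℝ f a v + L * t ^ (κ - 1) * ‖v‖ ^ κ) := by
    apply intervalIntegral.integral_mono_on zero_le_one (hcontd.intervalIntegrable 0 1)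
    · apply Continuous.intervalIntegrable
      have : Continuous (fun t : ℝ => t ^ (κ - 1)) := by
        rw [continuous_iff_continuousAt]
        exact fun t => Real.continuousAt_rpow_const t (κ-1) (Or.inr hκ0.le)
      continuity
    · exact hptwise
  have hrint : ∫ t in (0:ℝ)..1, (fderiv ℝ f a v + L * t ^ (κ - 1) * ‖v‖ ^ κ)
      = fderiv ℝ f a v + L / κ * ‖v‖ ^ κ := by
    rw [intervalIntegral.integral_add (intervalIntegrable_const)]
    · simp only [intervalIntegral.integral_const, smul_eq_mul, mul_one, sub_zero, one_mul]
      have : ∀ t : ℝ, L * t ^ (κ - 1) * ‖v‖ ^ κ = (L * ‖v‖ ^ κ) * t ^ (κ - 1) := fun t => by ring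
      simp_rw [this]
      rw [intervalIntegral.integral_const_mul, integral_rpow (Or.inl (by linarith))]
      rw [sub_add_cancel, Real.one_rpow, Real.zero_rpow (by linarith)]
      ring
    · apply Continuous.intervalIntegrable
      have : Continuous (fun t : ℝ => t ^ (κ - 1)) := by
        rw [continuous_iff_continuousAt]
        exact fun t => Real.continuousAt_rpow_const t (κ-1) (Or.inr hκ0.le)
      exact (continuous_const.mul this).mul continuous_const
  simp only [one_smul, zero_smul, add_zero] at key
  have hb : a + v = b := by simp [hv]
  rw [hb] at key
  rw [hrint] at hint
  linarith [key ▸ hint]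

lemma exists_norm_attain' {E : Type*} [NormedAddCommGroup E] [NormedSpace ℝ E]
    [FiniteDimensional ℝ E] (g : E →L[ℝ] ℝ) : ∃ u : E, ‖u‖ ≤ 1 ∧ g u = ‖g‖ := by
  have hcpt : IsCompact (Metric.closedBall (0:E) 1) := isCompact_closedBall 0 1
  obtain ⟨u, hu, hmax⟩ := hcpt.exists_isMaxOn ⟨0, by simp⟩ g.continuous.continuousOn
  have hu1 : ‖u‖ ≤ 1 := by simpa [Metric.mem_closedBall, dist_zero_right] using hu
  have hgu0 : 0 ≤ g u := by
    have := hmax (by simp : (0:E) ∈ Metric.closedBall (0:E) 1)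
    simpa using this
  refine ⟨u, hu1, le_antisymm ?_ ?_⟩
  · calc g u ≤ |g u| := le_abs_self _
      _ ≤ ‖g‖ * ‖u‖ := g.le_opNorm u
      _ ≤ ‖g‖ * 1 := by nlinarith [norm_nonneg g]
      _ = ‖g‖ := mul_one _
  · apply g.opNorm_le_bound hgu0
    intro x
    rcases eq_or_ne x 0 with rfl | hx
    · simp
    · have hxn : 0 < ‖x‖ := norm_pos_iff.mpr hx
      have hmem : ∀ c : ℝ, |c| ≤ 1 → (c * ‖x‖⁻¹) • x ∈ Metric.closedBall (0:E) 1 := by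
        intro c hc
        simp only [Metric.mem_closedBall, dist_zero_right, norm_smul, Real.norm_eq_abs]
        rw [abs_mul, abs_inv, abs_norm]
        calc |c| * ‖x‖⁻¹ * ‖x‖ = |c| := by field_simp
          _ ≤ 1 := hc
      have h1 := hmax (hmem 1 (by norm_num))
      have h2 := hmax (hmem (-1) (by norm_num))
      have h1' : ‖x‖⁻¹ * g x ≤ g u := by
        have := h1; simp only [Set.mem_setOf_eq, map_smul, smul_eq_mul] at this
        simpa using this
      have h2' : -(‖x‖⁻¹ * g x) ≤ g u := by
        have := h2; simp only [Set.mem_setOf_eq, map_neg, map_smul, smul_eq_mul] at this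
        simpa using this
      have habs : |g x| ≤ g u * ‖x‖ := by
        have hfix : ‖x‖ * (‖x‖⁻¹ * g x) = g x := by field_simp
        rw [abs_le]
        constructor
        · have := mul_le_mul_of_nonneg_left h2' hxn.le
          rw [mul_neg, hfix] at this; linarith
        · have := mul_le_mul_of_nonneg_left h1' hxn.le
          rw [hfix] at this; linarith
      simpa [Real.norm_eq_abs] using habs

/-- If `f : E → ℝ` is convex, differentiable, `(L, κ)`-weakly smooth w.r.t. `‖·‖` with
`κ ∈ (1,2]`, then for all `x, y`:
`((κ−1)/(L^{1/(κ−1)} κ)) ‖∇f(y) − ∇f(x)‖_*^{κ/(κ−1)} ≤ f(y) − f(x) − ⟨∇f(x), y − x⟩`. -/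
theorem stmt5 {E : Type*} [NormedAddCommGroup E] [NormedSpace ℝ E] [FiniteDimensional ℝ E]
    (f : E → ℝ) (L κ : ℝ) (hL : 0 < L) (hκ1 : 1 < κ) (hκ2 : κ ≤ 2)
    (hconv : ConvexOn ℝ Set.univ f) (hdiff : Differentiable ℝ f)
    (hsmooth : ∀ x y : E, ‖fderiv ℝ f x - fderiv ℝ f y‖ ≤ L * ‖x - y‖ ^ (κ - 1)) :
    ∀ x y : E,
      ((κ - 1) / (L ^ (1 / (κ - 1)) * κ)) * ‖fderiv ℝ f y - fderiv ℝ f x‖ ^ (κ / (κ - 1)) ≤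
        f y - f x - fderiv ℝ f x (y - x) := by
  intro x y
  have hκ0 : 0 < κ - 1 := by linarith
  have hκpos : 0 < κ := by linarith
  set g := fderiv ℝ f y - fderiv ℝ f x with hg
  have hbase := grad_ineq' f hconv hdiff x y
  by_cases hg0 : g = 0
  · rw [hg0]
    rw [norm_zero, Real.zero_rpow (by positivity), mul_zero]
    linarith
  · obtain ⟨u, hu1, hgu⟩ := exists_norm_attain' g
    have hgpos : 0 < ‖g‖ := norm_pos_iff.mpr hg0
    set t := (‖g‖ / L) ^ (1 / (κ - 1)) with ht
    have htpos : 0 < t := Real.rpow_pos_of_pos (div_pos hgpos hL) _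
    set z := y - t • u with hz
    have h1 := grad_ineq' f hconv hdiff x z
    have h2 := descent' f L κ hL hκ1 hdiff hsmooth y z
    -- rewrite linear terms
    have e1 : fderiv ℝ f x (z - x) = fderiv ℝ f x (y - x) - t * fderiv ℝ f x u := by
      have hzx : z - x = (y - x) - t • u := by rw [hz]; abel
      rw [hzx, map_sub, map_smul, smul_eq_mul]
    have e2 : fderiv ℝ f y (z - y) = -(t * fderiv ℝ f y u) := by
      have hzy : z - y = -(t • u) := by rw [hz]; abel
      rw [hzy, map_neg, map_smul, smul_eq_mul]
    have e3 : ‖z - y‖ ^ κ ≤ t ^ κ := by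
      have hle : ‖z - y‖ ≤ t := by
        have hzy : z - y = -(t • u) := by rw [hz]; abel
        rw [hzy, norm_neg, norm_smul, Real.norm_eq_abs, abs_of_pos htpos]
        nlinarith
      exact Real.rpow_le_rpow (norm_nonneg _) hle hκpos.le
    have e4 : t * fderiv ℝ f y u - t * fderiv ℝ f x u = t * ‖g‖ := by
      rw [← mul_sub]
      have : fderiv ℝ f y u - fderiv ℝ f x u = ‖g‖ := by
        rw [← hgu, hg]; simp
      rw [this]
    have hLκ : 0 ≤ L / κ := by positivity
    have hcomb : t * ‖g‖ - L / κ * t ^ κ ≤ f y - f x - fderiv ℝ f x (y - x) := by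
      rw [e1] at h1
      rw [e2] at h2
      have := mul_le_mul_of_nonneg_left e3 hLκ
      nlinarith
    -- algebraic identity for the optimal value
    have hkey : ((κ - 1) / (L ^ (1 / (κ - 1)) * κ)) * ‖g‖ ^ (κ / (κ - 1))
        = t * ‖g‖ - L / κ * t ^ κ := by
      have hq : κ / (κ - 1) = 1 / (κ - 1) + 1 := by field_simp; ring
      have hBpos : (0:ℝ) < L ^ (1 / (κ - 1)) := Real.rpow_pos_of_pos hL _
      have hApos : (0:ℝ) < ‖g‖ ^ (κ / (κ - 1)) := Real.rpow_pos_of_pos hgpos _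
      have hmul : 1 / (κ - 1) * κ = κ / (κ - 1) := by
        rw [div_mul_eq_mul_div, one_mul]
      have htκ : t ^ κ = ‖g‖ ^ (κ / (κ - 1)) / L ^ (κ / (κ - 1)) := by
        rw [ht, ← Real.rpow_mul (div_pos hgpos hL).le, hmul,
          Real.div_rpow hgpos.le hL.le]
      have htg : t * ‖g‖ = ‖g‖ ^ (κ / (κ - 1)) / L ^ (1 / (κ - 1)) := by
        rw [ht, Real.div_rpow hgpos.le hL.le, hq, Real.rpow_add hgpos, Real.rpow_one]
        ring
      have hLq : L ^ (κ / (κ - 1)) = L ^ (1 / (κ - 1)) * L := by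
        rw [hq, Real.rpow_add hL, Real.rpow_one]
      rw [htκ, htg, hLq]
      field_simp
    rw [hkey]
    exact hcomb
end

section
/- Let f be (L, κ)-weakly smooth w.r.t. ‖·‖ with κ ∈ (1,2], let p ≥ κ and δ > 0, and set M = [2(p−κ)/(pκδ)]^{(p−κ)/κ} · L^{p/κ}. Then for all x, y ∈ E: f(y) ≤ f(x) + ⟨∇f(x), y − x⟩ + (M/p)‖y − x‖^p + δ/2. -/
open MeasureTheory intervalIntegral Filter Topology

private lemma descent_lemma {E : Type*} [NormedAddCommGroup E] [NormedSpace ℝ E]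
    (f : E → ℝ) (L κ : ℝ) (hL : 0 < L) (hκ1 : 1 < κ)
    (hdiff : Differentiable ℝ f)
    (hsmooth : ∀ x y : E, ‖fderiv ℝ f x - fderiv ℝ f y‖ ≤ L * ‖x - y‖ ^ (κ - 1))
    (x y : E) :
    f y ≤ f x + fderiv ℝ f x (y - x) + (L / κ) * ‖y - x‖ ^ κ := by
  have hκ0 : (0:ℝ) < κ := by linarith
  set v := y - x with hv
  have hderiv : ∀ t : ℝ, HasDerivAt (fun t : ℝ => f (x + t • v))
      (fderiv ℝ f (x + t • v) v) t := by
    intro t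
    have h1 : HasDerivAt (fun t : ℝ => x + t • v) v t := by
      simpa using ((hasDerivAt_id t).smul_const v).const_add x
    simpa [Function.comp_def] using ((hdiff (x + t • v)).hasFDerivAt.comp_hasDerivAt t h1)
  have hcont : Continuous fun z : E => fderiv ℝ f z := by
    rw [continuous_iff_continuousAt]
    intro z
    rw [ContinuousAt, tendsto_iff_norm_sub_tendsto_zero]
    have h0 : Tendsto (fun w : E => ‖w - z‖) (𝓝 z) (𝓝 0) := tendsto_norm_sub_self z
    have h2 : Tendsto (fun w : E => L * ‖w - z‖ ^ (κ - 1)) (𝓝 z) (𝓝 0) := by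
      have h3 := ((Real.continuousAt_rpow_const 0 (κ - 1)
        (Or.inr (by linarith))).tendsto).comp h0
      have : Tendsto (fun w : E => ‖w - z‖ ^ (κ - 1)) (𝓝 z) (𝓝 0) := by
        simpa [Function.comp_def, Real.zero_rpow (by linarith : κ - 1 ≠ 0)] using h3
      simpa using this.const_mul L
    exact squeeze_zero (fun w => norm_nonneg _) (fun w => hsmooth w z) h2
  have hgcont : Continuous fun t : ℝ => fderiv ℝ f (x + t • v) v :=
    (hcont.comp (continuous_const.add (continuous_id.smul continuous_const))).clm_apply
      continuous_const
  have hint : IntervalIntegrable (fun t : ℝ => fderiv ℝ f (x + t • v) v) volume 0 1 :=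
    hgcont.intervalIntegrable 0 1
  have hftc : ∫ t in (0:ℝ)..1, fderiv ℝ f (x + t • v) v = f y - f x := by
    have := intervalIntegral.integral_eq_sub_of_hasDerivAt
      (f := fun t : ℝ => f (x + t • v)) (fun t _ => hderiv t) hint
    simpa [hv] using this
  have hbound : ∀ t ∈ Set.Icc (0:ℝ) 1,
      fderiv ℝ f (x + t • v) v - fderiv ℝ f x v ≤ (L * ‖v‖ ^ κ) * t ^ (κ - 1) := by
    intro t ht
    have ht0 : 0 ≤ t := ht.1
    have h1 : fderiv ℝ f (x + t • v) v - fderiv ℝ f x v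
        = (fderiv ℝ f (x + t • v) - fderiv ℝ f x) v := by simp
    have h2 : (fderiv ℝ f (x + t • v) - fderiv ℝ f x) v
        ≤ ‖fderiv ℝ f (x + t • v) - fderiv ℝ f x‖ * ‖v‖ := by
      calc (fderiv ℝ f (x + t • v) - fderiv ℝ f x) v
          ≤ ‖(fderiv ℝ f (x + t • v) - fderiv ℝ f x) v‖ := le_abs_self _
        _ ≤ ‖fderiv ℝ f (x + t • v) - fderiv ℝ f x‖ * ‖v‖ :=
            ContinuousLinearMap.le_opNorm _ _
    have h3 : ‖fderiv ℝ f (x + t • v) - fderiv ℝ f x‖ ≤ L * ‖t • v‖ ^ (κ - 1) := by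
      simpa using hsmooth (x + t • v) x
    have h4 : ‖t • v‖ ^ (κ - 1) = t ^ (κ - 1) * ‖v‖ ^ (κ - 1) := by
      rw [norm_smul, Real.norm_eq_abs, abs_of_nonneg ht0,
        Real.mul_rpow ht0 (norm_nonneg v)]
    have h5 : ‖v‖ ^ (κ - 1) * ‖v‖ = ‖v‖ ^ κ := by
      rcases eq_or_lt_of_le (norm_nonneg v) with h | h
      · rw [← h, Real.zero_rpow (by linarith : κ - 1 ≠ 0),
          Real.zero_rpow (by linarith : κ ≠ 0)]
        ring
      · rw [show κ = κ - 1 + 1 by ring, Real.rpow_add_one h.ne']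
        norm_num
    calc fderiv ℝ f (x + t • v) v - fderiv ℝ f x v
        ≤ ‖fderiv ℝ f (x + t • v) - fderiv ℝ f x‖ * ‖v‖ := by rw [h1]; exact h2
      _ ≤ (L * (t ^ (κ - 1) * ‖v‖ ^ (κ - 1))) * ‖v‖ := by
          rw [← h4]
          exact mul_le_mul_of_nonneg_right h3 (norm_nonneg v)
      _ = (L * ‖v‖ ^ κ) * t ^ (κ - 1) := by rw [← h5]; ring
  have hintR : IntervalIntegrable (fun t : ℝ => (L * ‖v‖ ^ κ) * t ^ (κ - 1)) volume 0 1 :=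
    (intervalIntegral.intervalIntegrable_rpow' (by linarith)).const_mul _
  have hmono := intervalIntegral.integral_mono_on (by norm_num : (0:ℝ) ≤ 1)
    (hint.sub intervalIntegrable_const) hintR
    (g := fun t : ℝ => (L * ‖v‖ ^ κ) * t ^ (κ - 1))
    (f := fun t : ℝ => fderiv ℝ f (x + t • v) v - fderiv ℝ f x v) hbound
  have hL1 : ∫ t in (0:ℝ)..1, (fderiv ℝ f (x + t • v) v - fderiv ℝ f x v)
      = f y - f x - fderiv ℝ f x v := by
    rw [intervalIntegral.integral_sub hint intervalIntegrable_const, hftc]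
    simp
  have hR1 : ∫ t in (0:ℝ)..1, (L * ‖v‖ ^ κ) * t ^ (κ - 1) = (L / κ) * ‖v‖ ^ κ := by
    rw [intervalIntegral.integral_const_mul, integral_rpow (Or.inl (by linarith))]
    rw [show κ - 1 + 1 = κ by ring, Real.one_rpow, Real.zero_rpow (by linarith : κ ≠ 0)]
    field_simp
    ring
  rw [hL1, hR1] at hmono
  linarith


private lemma young_aux (L κ p δ M : ℝ) (hL : 0 < L) (hκ1 : 1 < κ)
    (hp : κ ≤ p) (hδ : 0 < δ)
    (hM : M = (2 * (p - κ) / (p * κ * δ)) ^ ((p - κ) / κ) * L ^ (p / κ)) :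
    ∀ t : ℝ, 0 ≤ t → (L / κ) * t ^ κ ≤ (M / p) * t ^ p + δ / 2 := by
  intro t ht
  have hκ0 : (0:ℝ) < κ := by linarith
  have hp0 : (0:ℝ) < p := by linarith
  rcases eq_or_lt_of_le hp with hpκ | hpκ
  · subst hpκ
    have hMe : M = L := by
      rw [hM]; simp [sub_self, div_self hκ0.ne']
    rw [hMe]
    nlinarith [Real.rpow_nonneg ht κ]
  · have hpκ0 : (0:ℝ) < p - κ := by linarith
    have hK : (0:ℝ) < 2 * (p - κ) / (p * κ * δ) := by positivity
    have hMpos : 0 < M := by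
      rw [hM]; positivity
    have hMκ : (0:ℝ) < M / κ := by positivity
    set a := (M / κ) ^ (κ / p) * t ^ κ with ha_def
    set b := (L / κ) / (M / κ) ^ (κ / p) with hb_def
    have hapos : 0 ≤ a := by positivity
    have hbpos : 0 < b := by positivity
    have hconj : (p / κ).HolderConjugate (p / (p - κ)) := by
      constructor
      · rw [inv_div, inv_div, inv_one, ← add_div, add_sub_cancel, div_self hp0.ne']
      · positivity
      · positivity
    have young := Real.young_inequality_of_nonneg hapos hbpos.le hconj
    have hab : a * b = (L / κ) * t ^ κ := by
      rw [ha_def, hb_def]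
      have : ((M / κ) ^ (κ / p) : ℝ) ≠ 0 := (Real.rpow_pos_of_pos hMκ _).ne'
      field_simp
    have har : a ^ (p / κ) / (p / κ) = (M / p) * t ^ p := by
      rw [ha_def, Real.mul_rpow (Real.rpow_nonneg hMκ.le _) (Real.rpow_nonneg ht _),
        ← Real.rpow_mul hMκ.le, ← Real.rpow_mul ht,
        show κ / p * (p / κ) = 1 by field_simp, Real.rpow_one,
        show κ * (p / κ) = p by field_simp]
      field_simp
    have hbq : b ^ (p / (p - κ)) / (p / (p - κ)) = δ / 2 := by
      have hrhs : (0:ℝ) < δ * p / (2 * (p - κ)) := by positivity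
      have key : b ^ (p / (p - κ)) = δ * p / (2 * (p - κ)) := by
        rw [Real.rpow_def_of_pos hbpos, ← Real.exp_log hrhs]
        congr 1
        have lb : Real.log b = (Real.log L - Real.log κ)
            - (κ / p) * (Real.log M - Real.log κ) := by
          rw [hb_def, Real.log_div (show (0:ℝ) < L / κ by positivity).ne' (Real.rpow_pos_of_pos hMκ _).ne',
            Real.log_div hL.ne' hκ0.ne', Real.log_rpow hMκ,
            Real.log_div hMpos.ne' hκ0.ne']
        have lM : Real.log M = ((p - κ) / κ) * (Real.log 2 + Real.log (p - κ)
            - (Real.log p + Real.log κ + Real.log δ)) + (p / κ) * Real.log L := by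
          rw [hM, Real.log_mul (Real.rpow_pos_of_pos hK _).ne'
              (Real.rpow_pos_of_pos hL _).ne',
            Real.log_rpow hK, Real.log_rpow hL,
            Real.log_div (show (0:ℝ) < 2 * (p - κ) by positivity).ne'
              (show (0:ℝ) < p * κ * δ by positivity).ne',
            Real.log_mul two_ne_zero hpκ0.ne',
            Real.log_mul (show (0:ℝ) < p * κ by positivity).ne' hδ.ne',
            Real.log_mul hp0.ne' hκ0.ne']
        have lrhs : Real.log (δ * p / (2 * (p - κ)))
            = Real.log δ + Real.log p - (Real.log 2 + Real.log (p - κ)) := by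
          rw [Real.log_div (show (0:ℝ) < δ * p by positivity).ne'
              (show (0:ℝ) < 2 * (p - κ) by positivity).ne',
            Real.log_mul hδ.ne' hp0.ne', Real.log_mul two_ne_zero hpκ0.ne']
        rw [lb, lM, lrhs]
        field_simp
        ring
      rw [key]
      field_simp
    rw [hab, har, hbq] at young
    exact young

/-- Let `f` be `(L, κ)`-weakly smooth w.r.t. `‖·‖` with `κ ∈ (1,2]`, `p ≥ κ`, `δ > 0`,
and `M = [2(p−κ)/(pκδ)]^{(p−κ)/κ} · L^{p/κ}`.  Then for all `x, y`:
`f(y) ≤ f(x) + ⟨∇f(x), y − x⟩ + (M/p)‖y − x‖^p + δ/2`. -/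
theorem stmt6 {E : Type*} [NormedAddCommGroup E] [NormedSpace ℝ E] [FiniteDimensional ℝ E]
    (f : E → ℝ) (L κ p δ : ℝ) (hL : 0 < L) (hκ1 : 1 < κ) (hκ2 : κ ≤ 2)
    (hp : κ ≤ p) (hδ : 0 < δ)
    (hdiff : Differentiable ℝ f)
    (hsmooth : ∀ x y : E, ‖fderiv ℝ f x - fderiv ℝ f y‖ ≤ L * ‖x - y‖ ^ (κ - 1))
    (M : ℝ) (hM : M = (2 * (p - κ) / (p * κ * δ)) ^ ((p - κ) / κ) * L ^ (p / κ)) :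
    ∀ x y : E,
      f y ≤ f x + fderiv ℝ f x (y - x) + (M / p) * ‖y - x‖ ^ p + δ / 2 := by
  intro x y
  have h1 := descent_lemma f L κ hL hκ1 hdiff hsmooth x y
  have h2 := young_aux L κ p δ M hL hκ1 hp hδ hM ‖y - x‖ (norm_nonneg _)
  linarith
end
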